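/- arXiv:quant-ph/0502106 — 4 statements merged into one kernel-verified Lean document; each statement's English description precedes it below -/
import Mathlib

section
/- Let D and K be positive integers and let t_1, …, t_K ∈ M_D(ℂ) be Kraus operators of a unital channel T : M_D(ℂ) → M_D(ℂ), T(X) = Σ_{i=1}^K t_iᴴ X t_i, so that Σ_{i=1}^K t_iᴴ t_i = 1. Then there exists a quantum code of dimension at least ⌊D / 2^{K²}⌋ for T: there exist an orthonormal family of vectors φ_1, …, φ_m in ℂ^D with m = ⌊D / 2^{K²}⌋ and complex numbers ω_{ij} (for 1 ≤ i, j ≤ K) such that the Knill–Laflamme conditions ⟨φ_α, t_iᴴ t_j φ_β⟩ = ω_{ij} · δ_{αβ} hold for all i, j ∈ {1,…,K} and all α, β ∈ {1,…,m}. -/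
open scoped Matrix InnerProductSpace
open Module

private lemma span_form {E : Type*} [NormedAddCommGroup E] [InnerProductSpace ℂ E]
    (f : E →ₗ[ℂ] E) (c : ℂ) {ι : Type*} (w : ι → E)
    (h : ∀ k l, ⟪w k, f (w l)⟫_ℂ = c * ⟪w k, w l⟫_ℂ) :
    ∀ x ∈ Submodule.span ℂ (Set.range w), ∀ y ∈ Submodule.span ℂ (Set.range w),
      ⟪x, f y⟫_ℂ = c * ⟪x, y⟫_ℂ := by
  have claim1 : ∀ (l : ι), ∀ x ∈ Submodule.span ℂ (Set.range w),
      ⟪x, f (w l)⟫_ℂ = c * ⟪x, w l⟫_ℂ := by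
    intro l x hx
    induction hx using Submodule.span_induction with
    | mem x hx => obtain ⟨k, rfl⟩ := hx; exact h k l
    | zero => simp
    | add x y hx hy ihx ihy => simp [inner_add_left, ihx, ihy]; ring
    | smul a x hx ih => simp [inner_smul_left, ih]; ring
  intro x hx y hy
  induction hy using Submodule.span_induction with
  | mem y hy => obtain ⟨l, rfl⟩ := hy; exact claim1 l x hx
  | zero => simp
  | add y z hy hz ihy ihz => simp [inner_add_right, ihy, ihz]; ring
  | smul a y hy ih => simp [inner_smul_right, ih]; ring

private lemma halve_aux {E : Type*} [NormedAddCommGroup E] [InnerProductSpace ℂ E]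
    (f : E →ₗ[ℂ] E) (V : Submodule ℂ E)
    (n : ℕ) (m : ℕ) (hm : m = n / 2) (hm0 : 0 < m) (hmn : m < n) (h2m : m * 2 ≤ n)
    (u : Fin n → E) (humem : ∀ i, u i ∈ V)
    (ν : Fin n → ℝ) (hmono : Monotone ν)
    (hip : ∀ i j, ⟪u i, u j⟫_ℂ = if i = j then 1 else 0)
    (hform : ∀ i j, ⟪u i, f (u j)⟫_ℂ = (ν j : ℂ) * (if i = j then 1 else 0)) :
    ∃ W : Submodule ℂ E, W ≤ V ∧ finrank ℂ W = m ∧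
      ∃ c : ℂ, ∀ x ∈ W, ∀ y ∈ W, ⟪x, f y⟫_ℂ = c * ⟪x, y⟫_ℂ := by
  set a : Fin m → Fin n := fun k => ⟨k.1, by omega⟩ with ha
  set d : Fin m → Fin n := fun k => ⟨n - 1 - k.1, by omega⟩ with hd
  set cR : ℝ := ν ⟨m, hmn⟩ with hcR
  have hνa : ∀ k, ν (a k) ≤ cR := fun k =>
    hmono (by rw [Fin.le_def]; show k.1 ≤ m; omega)
  have hνb : ∀ k, cR ≤ ν (d k) := fun k =>
    hmono (by rw [Fin.le_def]; show m ≤ n - 1 - k.1; omega)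
  set tk : Fin m → ℝ := fun k =>
    if ν (d k) ≤ ν (a k) then 1 else (ν (d k) - cR) / (ν (d k) - ν (a k)) with htk
  have ht0 : ∀ k, 0 ≤ tk k := by
    intro k; rw [htk]; dsimp only
    split
    · norm_num
    · next h =>
      have := hνb k
      apply div_nonneg <;> linarith
  have ht1 : ∀ k, tk k ≤ 1 := by
    intro k; rw [htk]; dsimp only
    split
    · norm_num
    · next h =>
      rw [div_le_one (by linarith)]
      have := hνa k; linarith
  have hmix : ∀ k, tk k * ν (a k) + (1 - tk k) * ν (d k) = cR := by
    intro k; rw [htk]; dsimp only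
    split
    · next h => have h1 := hνa k; have h2 := hνb k; nlinarith
    · next h =>
      have hne : ν (d k) - ν (a k) ≠ 0 := by intro h'; apply h; linarith
      field_simp
      ring
  have had : ∀ k l : Fin m, a k ≠ d l := by
    intro k l h
    have := congrArg Fin.val h
    simp [ha, hd] at this; omega
  have hda : ∀ k l : Fin m, d k ≠ a l := fun k l h => had l k h.symm
  have hai : ∀ k l : Fin m, (a k = a l) ↔ k = l := by
    intro k l
    constructor
    · intro h; have := congrArg Fin.val h; simp [ha] at this; exact Fin.ext this
    · rintro rfl; rfl
  have hdi : ∀ k l : Fin m, (d k = d l) ↔ k = l := by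
    intro k l
    constructor
    · intro h; have := congrArg Fin.val h; simp [hd] at this
      exact Fin.ext (by omega)
    · rintro rfl; rfl
  have hs1 : ∀ k, (Real.sqrt (tk k) : ℂ) * Real.sqrt (tk k) = (tk k : ℂ) := by
    intro k
    rw [← Complex.ofReal_mul, Real.mul_self_sqrt (ht0 k)]
  have hs2 : ∀ k, (Real.sqrt (1 - tk k) : ℂ) * Real.sqrt (1 - tk k) = 1 - (tk k : ℂ) := by
    intro k
    rw [← Complex.ofReal_mul, Real.mul_self_sqrt (by have := ht1 k; linarith)]
    push_cast; ring
  set w : Fin m → E := fun k =>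
    (Real.sqrt (tk k) : ℂ) • u (a k) + (Real.sqrt (1 - tk k) : ℂ) • u (d k) with hw
  have hwip : ∀ k l, ⟪w k, w l⟫_ℂ = if k = l then 1 else 0 := by
    intro k l
    rw [hw]
    simp only [inner_add_left, inner_add_right, inner_smul_left, inner_smul_right, hip,
      Complex.conj_ofReal, had, hda, hai, hdi, if_false]
    rcases eq_or_ne k l with rfl | hkl
    · norm_num
      linear_combination hs1 k + hs2 k
    · simp [hkl]
  have hwform : ∀ k l, ⟪w k, f (w l)⟫_ℂ = (cR : ℂ) * (if k = l then 1 else 0) := by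
    intro k l
    rw [hw]
    simp only [map_add, map_smul, inner_add_left, inner_add_right, inner_smul_left,
      inner_smul_right, hform, Complex.conj_ofReal, had, hda, hai, hdi, if_false]
    rcases eq_or_ne k l with rfl | hkl
    · norm_num
      have hmixC : ((tk k : ℂ)) * (ν (a k) : ℂ) + (1 - (tk k : ℂ)) * (ν (d k) : ℂ) = (cR : ℂ) := by
        have := hmix k
        push_cast
        exact_mod_cast congrArg (fun r : ℝ => (r : ℂ)) this
      linear_combination (ν (a k) : ℂ) * hs1 k + (ν (d k) : ℂ) * hs2 k + hmixC
    · simp [hkl]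
  have hwon : Orthonormal ℂ w := orthonormal_iff_ite.mpr hwip
  refine ⟨Submodule.span ℂ (Set.range w), ?_, ?_, (cR : ℂ), ?_⟩
  · rw [Submodule.span_le]
    rintro _ ⟨k, rfl⟩
    exact V.add_mem (V.smul_mem _ (humem _)) (V.smul_mem _ (humem _))
  · rw [finrank_span_eq_card hwon.linearIndependent, Fintype.card_fin]
  · exact span_form f _ w (fun k l => by rw [hwform, hwip])

private lemma key_half {E : Type*} [NormedAddCommGroup E] [InnerProductSpace ℂ E]
    [FiniteDimensional ℂ E]
    (f : E →ₗ[ℂ] E) (hf : ∀ x y : E, ⟪f x, y⟫_ℂ = ⟪x, f y⟫_ℂ)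
    (V : Submodule ℂ E) :
    ∃ W : Submodule ℂ E, W ≤ V ∧ finrank ℂ W = finrank ℂ V / 2 ∧
      ∃ c : ℂ, ∀ x ∈ W, ∀ y ∈ W, ⟪x, f y⟫_ℂ = c * ⟪x, y⟫_ℂ := by
  set n := finrank ℂ V with hn
  set m := n / 2 with hm
  rcases Nat.eq_zero_or_pos m with hm0 | hm0
  · refine ⟨⊥, bot_le, by simp [← hm, hm0], 0, ?_⟩
    intro x hx y hy
    simp only [Submodule.mem_bot] at hx
    simp [hx]
  · have hn0 : 0 < n := lt_of_lt_of_le hm0 (Nat.div_le_self n 2)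
    have hmn : m < n := Nat.div_lt_self hn0 one_lt_two
    have h2m : m * 2 ≤ n := Nat.div_mul_le_self n 2
    set g : V →ₗ[ℂ] V :=
      (V.orthogonalProjectionOnto).toLinearMap ∘ₗ (f ∘ₗ V.subtype) with hg_def
    have hginner : ∀ x y : V, ⟪x, g y⟫_ℂ = ⟪(x : E), f (y : E)⟫_ℂ := by
      intro x y
      simpa [hg_def] using Submodule.inner_orthogonalProjectionOnto_eq_of_mem_left (K := V) x (f (y : E))
    have hg : g.IsSymmetric := by
      intro x y
      rw [← inner_conj_symm, hginner y x, hginner x y, ← hf, inner_conj_symm]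
    obtain ⟨b, μ, hbv⟩ : ∃ (b : OrthonormalBasis (Fin n) ℂ V) (μ : Fin n → ℝ),
        ∀ i, g (b i) = (μ i : ℂ) • b i :=
      ⟨hg.eigenvectorBasis hn.symm, hg.eigenvalues hn.symm,
        fun i => hg.apply_eigenvectorBasis hn.symm i⟩
    set σ := Tuple.sort μ with hσ
    have hmono : Monotone (μ ∘ σ) := Tuple.monotone_sort μ
    set ν : Fin n → ℝ := μ ∘ σ with hν
    set u : Fin n → E := fun i => (b (σ i) : E) with hu_def
    have humem : ∀ i, u i ∈ V := fun i => (b (σ i)).2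
    have hip : ∀ i j, ⟪u i, u j⟫_ℂ = if i = j then 1 else 0 := by
      intro i j
      have := orthonormal_iff_ite.mp ((b.orthonormal).comp σ σ.injective) i j
      simpa [Submodule.coe_inner, hu_def, σ.injective.eq_iff] using this
    have hform : ∀ i j, ⟪u i, f (u j)⟫_ℂ = (ν j : ℂ) * (if i = j then 1 else 0) := by
      intro i j
      rw [← hginner (b (σ i)) (b (σ j)), hbv (σ j), inner_smul_right]
      have := orthonormal_iff_ite.mp (b.orthonormal) (σ i) (σ j)
      rw [this]
      simp [σ.injective.eq_iff, hν]
    exact halve_aux f V n m hm hm0 hmn h2m u humem ν hmono hip hform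

private lemma iter_halve {E : Type*} [NormedAddCommGroup E] [InnerProductSpace ℂ E]
    [FiniteDimensional ℂ E]
    (L : List (E →ₗ[ℂ] E)) (hL : ∀ f ∈ L, ∀ x y : E, ⟪f x, y⟫_ℂ = ⟪x, f y⟫_ℂ)
    (V : Submodule ℂ E) :
    ∃ W : Submodule ℂ E, W ≤ V ∧ finrank ℂ W = finrank ℂ V / 2 ^ L.length ∧
      ∀ f ∈ L, ∃ c : ℂ, ∀ x ∈ W, ∀ y ∈ W, ⟪x, f y⟫_ℂ = c * ⟪x, y⟫_ℂ := by
  induction L generalizing V with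
  | nil => exact ⟨V, le_rfl, by simp, by simp⟩
  | cons f L ih =>
    obtain ⟨W₁, hW₁V, hW₁rank, c, hc⟩ := key_half f (hL f List.mem_cons_self) V
    obtain ⟨W, hWW₁, hWrank, hWprop⟩ := ih (fun g hg => hL g (List.mem_cons_of_mem f hg)) W₁
    refine ⟨W, le_trans hWW₁ hW₁V, ?_, ?_⟩
    · rw [hWrank, hW₁rank, Nat.div_div_eq_div_mul, List.length_cons]
      ring_nf
    · intro g hg
      rcases List.mem_cons.mp hg with rfl | hg'
      · exact ⟨c, fun x hx y hy => hc x (hWW₁ hx) y (hWW₁ hy)⟩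
      · exact hWprop g hg'

/-- For a unital channel on `M_D(ℂ)` with `K` Kraus operators `t i`
(`Σ_i (t i)ᴴ (t i) = 1`) there is a quantum code of dimension
`⌊D / 2^(K²)⌋`: an orthonormal family `φ` of that size in `ℂ^D` together with
coefficients `ω i j` satisfying the Knill–Laflamme conditions
`⟪φ α, (t i)ᴴ (t j) φ β⟫ = ω i j · δ_{αβ}`. -/
theorem knill_laflamme_code_of_kraus
    (D K : ℕ) (hD : 0 < D) (hK : 0 < K)
    (t : Fin K → Matrix (Fin D) (Fin D) ℂ)
    (ht : ∑ i, (t i)ᴴ * t i = 1) :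
    ∃ φ : Fin (D / 2 ^ K ^ 2) → EuclideanSpace ℂ (Fin D),
      Orthonormal ℂ φ ∧
        ∃ ω : Fin K → Fin K → ℂ,
          ∀ (i j : Fin K) (α β : Fin (D / 2 ^ K ^ 2)),
            ⟪φ α, Matrix.toEuclideanLin ((t i)ᴴ * t j) (φ β)⟫_ℂ
              = ω i j * (if α = β then 1 else 0) := by
  classical
  set E := EuclideanSpace ℂ (Fin D)
  set A : Fin K → Fin K → Matrix (Fin D) (Fin D) ℂ := fun i j => (t i)ᴴ * t j with hA
  have hAH : ∀ i j, (A i j)ᴴ = A j i := by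
    intro i j
    simp [hA, Matrix.conjTranspose_mul]
  set M : Fin K × Fin K → Matrix (Fin D) (Fin D) ℂ := fun p =>
    if p.1 ≤ p.2 then A p.1 p.2 + A p.2 p.1 else Complex.I • (A p.1 p.2 - A p.2 p.1) with hM
  have hMherm : ∀ p, (M p).IsHermitian := by
    intro p
    rw [hM]
    dsimp only
    split
    · unfold Matrix.IsHermitian
      rw [Matrix.conjTranspose_add, hAH, hAH, add_comm]
    · unfold Matrix.IsHermitian
      rw [Matrix.conjTranspose_smul, Matrix.conjTranspose_sub, hAH, hAH]
      simp [smul_sub, Complex.conj_I]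
      abel
  set L : List (E →ₗ[ℂ] E) :=
    ((List.finRange K) ×ˢ (List.finRange K)).map
      (fun p => (Matrix.toEuclideanLin (M p) : E →ₗ[ℂ] E)) with hL
  have hLlen : L.length = K ^ 2 := by
    rw [hL, List.length_map, List.length_product, List.length_finRange, sq]
  have hLsym : ∀ f ∈ L, ∀ x y : E, ⟪f x, y⟫_ℂ = ⟪x, f y⟫_ℂ := by
    intro f hf x y
    rw [hL, List.mem_map] at hf
    obtain ⟨p, _, rfl⟩ := hf
    exact (Matrix.isHermitian_iff_isSymmetric.mp (hMherm p)) x y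
  obtain ⟨W, _, hWrank, hWprop⟩ := iter_halve L hLsym ⊤
  have hrank : finrank ℂ W = D / 2 ^ K ^ 2 := by
    rw [hWrank, hLlen, finrank_top, finrank_euclideanSpace, Fintype.card_fin]
  have hmemL : ∀ p : Fin K × Fin K, (Matrix.toEuclideanLin (M p) : E →ₗ[ℂ] E) ∈ L := by
    intro p
    rw [hL, List.mem_map]
    exact ⟨p, List.mem_product.mpr ⟨List.mem_finRange _, List.mem_finRange _⟩, rfl⟩
  have hchoice : ∀ p : Fin K × Fin K, ∃ c : ℂ, ∀ x ∈ W, ∀ y ∈ W,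
      ⟪x, Matrix.toEuclideanLin (M p) y⟫_ℂ = c * ⟪x, y⟫_ℂ :=
    fun p => hWprop _ (hmemL p)
  choose cM hcM using hchoice
  set ω : Fin K → Fin K → ℂ := fun i j =>
    if i = j then cM (i, i) / 2
    else if i ≤ j then (cM (i, j) + Complex.I * cM (j, i)) / 2
    else (cM (j, i) - Complex.I * cM (i, j)) / 2 with hω
  have main : ∀ (i j : Fin K), ∀ x ∈ W, ∀ y ∈ W,
      ⟪x, Matrix.toEuclideanLin (A i j) y⟫_ℂ = ω i j * ⟪x, y⟫_ℂ := by
    intro i j x hx y hy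
    rcases lt_trichotomy i j with hij | rfl | hij
    · have h1 := hcM (i, j) x hx y hy
      have h2 := hcM (j, i) x hx y hy
      rw [hM] at h1 h2
      dsimp only at h1 h2
      rw [if_pos (le_of_lt hij)] at h1
      rw [if_neg (not_le.mpr hij)] at h2
      simp only [map_add, LinearMap.add_apply, inner_add_right] at h1
      rw [inner_add_right] at h1
      simp only [map_smul, map_sub, LinearMap.smul_apply, LinearMap.sub_apply, inner_smul_right, inner_sub_right] at h2
      rw [hω]
      dsimp only
      rw [if_neg (ne_of_lt hij), if_pos (le_of_lt hij)]
      linear_combination h1 / 2 + Complex.I / 2 * h2 + (⟪x, Matrix.toEuclideanLin (A i j) y⟫_ℂ - ⟪x, Matrix.toEuclideanLin (A j i) y⟫_ℂ) / 2 * Complex.I_sq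
    · have h1 := hcM (i, i) x hx y hy
      rw [hM] at h1
      dsimp only at h1
      rw [if_pos le_rfl] at h1
      simp only [map_add, LinearMap.add_apply, inner_add_right] at h1
      rw [inner_add_right] at h1
      rw [hω]
      dsimp only
      rw [if_pos rfl]
      linear_combination h1 / 2
    · have h1 := hcM (j, i) x hx y hy
      have h2 := hcM (i, j) x hx y hy
      rw [hM] at h1 h2
      dsimp only at h1 h2
      rw [if_pos (le_of_lt hij)] at h1
      rw [if_neg (not_le.mpr hij)] at h2
      simp only [map_add, LinearMap.add_apply, inner_add_right] at h1
      rw [inner_add_right] at h1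
      simp only [map_smul, map_sub, LinearMap.smul_apply, LinearMap.sub_apply, inner_smul_right, inner_sub_right] at h2
      rw [hω]
      dsimp only
      rw [if_neg (ne_of_gt hij), if_neg (not_le.mpr hij)]
      linear_combination h1 / 2 - Complex.I / 2 * h2 + (⟪x, Matrix.toEuclideanLin (A i j) y⟫_ℂ - ⟪x, Matrix.toEuclideanLin (A j i) y⟫_ℂ) / 2 * Complex.I_sq
  set b := stdOrthonormalBasis ℂ W with hb
  set φ : Fin (D / 2 ^ K ^ 2) → E := fun α => (b (Fin.cast hrank.symm α) : E) with hφ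
  have hφmem : ∀ α, φ α ∈ W := fun α => (b (Fin.cast hrank.symm α)).2
  have hφon : Orthonormal ℂ φ := by
    rw [orthonormal_iff_ite]
    intro α β
    have := orthonormal_iff_ite.mp (b.orthonormal) (Fin.cast hrank.symm α) (Fin.cast hrank.symm β)
    rw [Submodule.coe_inner] at this
    rw [hφ]
    dsimp only
    rw [this]
    congr 1
    simp [Fin.ext_iff]
  refine ⟨φ, hφon, ω, ?_⟩
  intro i j α β
  have h := main i j (φ α) (hφmem α) (φ β) (hφmem β)
  rw [orthonormal_iff_ite.mp hφon α β] at h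
  simp only [hA] at h
  exact h
end

section
/- Let D be a positive integer and let τ ∈ M_D(ℂ) be Hermitian (τᴴ = τ). Then there exist a real number ω and an orthonormal family of vectors φ_1, …, φ_m in ℂ^D with m = ⌊D/2⌋ such that ⟨φ_α, τ φ_β⟩ = ω · δ_{αβ} for all α, β ∈ {1,…,m}. (Each φ_α can be constructed as a suitably weighted combination of one eigenvector of τ with eigenvalue above ω and one with eigenvalue below ω.) -/
open scoped Matrix InnerProductSpace

/-- For any Hermitian matrix `τ ∈ M_D(ℂ)` there are a real number `ω` and an
orthonormal family `φ_1, …, φ_m` in `ℂ^D` with `m = ⌊D/2⌋` such that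
`⟪φ α, τ φ β⟫ = ω · δ_{αβ}` for all `α, β`. -/
theorem hermitian_balanced_pairing
    (D : ℕ) (hD : 0 < D)
    (τ : Matrix (Fin D) (Fin D) ℂ) (hτ : τ.IsHermitian) :
    ∃ (ω : ℝ) (φ : Fin (D / 2) → EuclideanSpace ℂ (Fin D)),
      Orthonormal ℂ φ ∧
        ∀ (α β : Fin (D / 2)),
          ⟪φ α, Matrix.toEuclideanLin τ (φ β)⟫_ℂ
            = (ω : ℂ) * (if α = β then 1 else 0) := by
  classical
  set m := D / 2 with hm_def
  have hmD : m < D := Nat.div_lt_self hD one_lt_two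
  have hmm : m + m ≤ D := by
    have := Nat.div_add_mod D 2
    omega
  set u := hτ.eigenvectorBasis with hu_def
  set lam := hτ.eigenvalues with hlam_def
  set σ := Tuple.sort lam with hσ_def
  have hmono : Monotone (lam ∘ σ) := Tuple.monotone_sort lam
  -- eigenvector equation in EuclideanSpace
  have hEig : ∀ j : Fin D, Matrix.toEuclideanLin τ (u j) = (lam j : ℂ) • u j := by
    intro j
    apply (WithLp.equiv 2 (Fin D → ℂ)).injective
    have h := hτ.mulVec_eigenvectorBasis j
    show τ *ᵥ (WithLp.equiv 2 (Fin D → ℂ)) (u j) = _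
    calc τ *ᵥ (WithLp.equiv 2 (Fin D → ℂ)) (u j)
        = τ *ᵥ ⇑(u j) := rfl
      _ = lam j • ⇑(u j) := h
      _ = (WithLp.equiv 2 (Fin D → ℂ)) ((lam j : ℂ) • u j) := by
          ext i
          simp [Complex.real_smul]
  -- index maps
  have hpα : ∀ α : Fin m, (α : ℕ) < D := fun α => lt_trans α.2 hmD
  have hqα : ∀ α : Fin m, D - 1 - (α : ℕ) < D := fun α => by omega
  set p : Fin m → Fin D := fun α => σ ⟨α, hpα α⟩ with hp_def
  set q : Fin m → Fin D := fun α => σ ⟨D - 1 - α, hqα α⟩ with hq_def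
  have hpq : ∀ α β : Fin m, p α ≠ q β := by
    intro α β h
    have h2 : (α : ℕ) = D - 1 - (β : ℕ) := by simpa using σ.injective h
    have hβ : (β : ℕ) < m := β.2
    have hα : (α : ℕ) < m := α.2
    omega
  have hpinj : Function.Injective p := by
    intro α β h
    have h2 : (α : ℕ) = (β : ℕ) := by simpa using σ.injective h
    exact Fin.ext h2
  have hqinj : Function.Injective q := by
    intro α β h
    have h2 : D - 1 - (α : ℕ) = D - 1 - (β : ℕ) := by simpa using σ.injective h
    have hα : (α : ℕ) < m := α.2
    have hβ : (β : ℕ) < m := β.2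
    exact Fin.ext (by omega)
  -- ω and the weights
  set ω : ℝ := lam (σ ⟨m, hmD⟩) with hω_def
  set a : Fin m → ℝ := fun α => lam (p α) with ha_def
  set b : Fin m → ℝ := fun α => lam (q α) with hb_def
  have hab : ∀ α : Fin m, a α ≤ ω ∧ ω ≤ b α := by
    intro α
    constructor
    · exact hmono (show (⟨α, hpα α⟩ : Fin D) ≤ ⟨m, hmD⟩ from le_of_lt α.2)
    · refine hmono (show (⟨m, hmD⟩ : Fin D) ≤ ⟨D - 1 - α, hqα α⟩ from ?_)
      have hα : (α : ℕ) < m := α.2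
      exact Fin.mk_le_mk.mpr (by omega)
  set t : Fin m → ℝ := fun α => (b α - ω) / (b α - a α) with ht_def
  have ht01 : ∀ α : Fin m, 0 ≤ t α ∧ t α ≤ 1 := by
    intro α
    obtain ⟨h1, h2⟩ := hab α
    rcases eq_or_lt_of_le (h1.trans h2) with h | h
    · simp [ht_def, ← h]
    · constructor
      · exact div_nonneg (by linarith) (by linarith)
      · rw [div_le_one (by linarith)]; linarith
  have htab : ∀ α : Fin m, t α * a α + (1 - t α) * b α = ω := by
    intro α
    obtain ⟨h1, h2⟩ := hab α
    rcases eq_or_lt_of_le (h1.trans h2) with h | h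
    · have hω : ω = b α := le_antisymm h2 (h ▸ h1)
      simp [ht_def, ← h, hω]
    · have hne : b α - a α ≠ 0 := by linarith
      have hk : t α * (b α - a α) = b α - ω := by
        simp only [ht_def]; exact div_mul_cancel₀ _ hne
      linear_combination (-1 : ℝ) * hk
  set c : Fin m → ℝ := fun α => Real.sqrt (t α) with hc_def
  set d : Fin m → ℝ := fun α => Real.sqrt (1 - t α) with hd_def
  have hc2 : ∀ α, c α * c α = t α := fun α => Real.mul_self_sqrt (ht01 α).1
  have hd2 : ∀ α, d α * d α = 1 - t α := fun α =>
    Real.mul_self_sqrt (by linarith [(ht01 α).2])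
  set φ : Fin m → EuclideanSpace ℂ (Fin D) :=
    fun α => (c α : ℂ) • u (p α) + (d α : ℂ) • u (q α) with hφ_def
  have huon : ∀ i j : Fin D, ⟪u i, u j⟫_ℂ = if i = j then 1 else 0 :=
    fun i j => orthonormal_iff_ite.mp (u.orthonormal) i j
  -- key inner product computation
  have hinner : ∀ α β : Fin m,
      ⟪φ α, φ β⟫_ℂ = if α = β then 1 else 0 := by
    intro α β
    rcases eq_or_ne α β with rfl | hne
    · simp only [hφ_def, inner_add_left, inner_add_right, inner_smul_left, inner_smul_right,
        huon, Complex.conj_ofReal, if_pos rfl, if_neg (hpq α α), if_neg (Ne.symm (hpq α α))]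
      norm_cast
      push_cast
      linear_combination hc2 α + hd2 α
    · simp only [hφ_def, inner_add_left, inner_add_right, inner_smul_left, inner_smul_right,
        huon, Complex.conj_ofReal, if_neg (hpinj.ne hne), if_neg (hqinj.ne hne),
        if_neg (hpq α β), if_neg (Ne.symm (hpq β α)), if_neg hne]
      ring
  refine ⟨ω, φ, orthonormal_iff_ite.mpr hinner, ?_⟩
  intro α β
  have hTφ : Matrix.toEuclideanLin τ (φ β)
      = (c β : ℂ) • ((a β : ℂ) • u (p β)) + (d β : ℂ) • ((b β : ℂ) • u (q β)) := by
    simp only [hφ_def, map_add, LinearMap.map_smul, hEig, ha_def, hb_def]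
  rw [hTφ]
  rcases eq_or_ne α β with rfl | hne
  · simp only [hφ_def, inner_add_left, inner_add_right, inner_smul_left, inner_smul_right,
      huon, Complex.conj_ofReal, if_pos rfl, if_neg (hpq α α), if_neg (Ne.symm (hpq α α))]
    norm_cast
    push_cast
    linear_combination (a α) * hc2 α + (b α) * hd2 α + htab α
  · simp only [hφ_def, inner_add_left, inner_add_right, inner_smul_left, inner_smul_right,
      huon, Complex.conj_ofReal, if_neg (hpinj.ne hne), if_neg (hqinj.ne hne),
      if_neg (hpq α β), if_neg (Ne.symm (hpq β α)), if_neg hne]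
    ring
end

section
/- Let B be a unital C*-algebra, let H, K, K₁ be complex Hilbert spaces, let π : B → B(K) and π₁ : B → B(K₁) be unital *-homomorphisms, and let V : H → K and V₁ : H → K₁ be isometric linear maps such that Vᴴ π(b) V = V₁ᴴ π₁(b) V₁ for all b ∈ B. Assume minimality of (K, π, V): the closed linear span of { π(b) V ψ : b ∈ B, ψ ∈ H } equals K. Then there exists an isometric linear map W : K → K₁ satisfying the intertwining relation W π(b) = π₁(b) W for all b ∈ B, and W V = V₁. (Uniqueness of the minimal Stinespring dilation up to an isometric intertwiner.) -/
open ContinuousLinearMap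
open scoped InnerProductSpace

private lemma stinespring_inner_aux
    {B : Type*} [NormedRing B] [StarRing B] [CStarRing B]
    [NormedAlgebra ℂ B] [StarModule ℂ B] [CompleteSpace B]
    {H K' : Type*}
    [NormedAddCommGroup H] [InnerProductSpace ℂ H] [CompleteSpace H]
    [NormedAddCommGroup K'] [InnerProductSpace ℂ K'] [CompleteSpace K']
    (ρ : B →⋆ₐ[ℂ] (K' →L[ℂ] K')) (U : H →L[ℂ] K')
    (b c : B) (ψ χ : H) :
    ⟪ρ b (U ψ), ρ c (U χ)⟫_ℂ =
      ⟪ψ, ((adjoint U).comp ((ρ (star b * c)).comp U)) χ⟫_ℂ := by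
  rw [← adjoint_inner_right (ρ b)]
  rw [← star_eq_adjoint, ← map_star, ← ContinuousLinearMap.comp_apply,
    ← ContinuousLinearMap.mul_def, ← map_mul]
  rw [← adjoint_inner_right U]
  simp [ContinuousLinearMap.comp_apply]


/-- Uniqueness of the minimal Stinespring dilation up to an isometric
intertwiner: if `(K, π, V)` and `(K₁, π₁, V₁)` are Stinespring representations
of the same completely positive map (`Vᴴ π(b) V = V₁ᴴ π₁(b) V₁` for all `b`)
with `V, V₁` isometric and `(K, π, V)` minimal (the closed linear span of
`π(B) V H` is all of `K`), then there is an isometric linear map `W : K → K₁`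
with `W π(b) = π₁(b) W` for all `b` and `W V = V₁`. -/
theorem minimal_stinespring_unique
    {B : Type*} [NormedRing B] [StarRing B] [CStarRing B]
    [NormedAlgebra ℂ B] [StarModule ℂ B] [CompleteSpace B]
    {H K K₁ : Type*}
    [NormedAddCommGroup H] [InnerProductSpace ℂ H] [CompleteSpace H]
    [NormedAddCommGroup K] [InnerProductSpace ℂ K] [CompleteSpace K]
    [NormedAddCommGroup K₁] [InnerProductSpace ℂ K₁] [CompleteSpace K₁]
    (π : B →⋆ₐ[ℂ] (K →L[ℂ] K)) (π₁ : B →⋆ₐ[ℂ] (K₁ →L[ℂ] K₁))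
    (V : H →L[ℂ] K) (V₁ : H →L[ℂ] K₁)
    (hV : ∀ x, ‖V x‖ = ‖x‖) (hV₁ : ∀ x, ‖V₁ x‖ = ‖x‖)
    (heq : ∀ b : B,
      (adjoint V).comp ((π b).comp V) = (adjoint V₁).comp ((π₁ b).comp V₁))
    (hmin : (Submodule.span ℂ
        {x : K | ∃ (b : B) (ψ : H), x = π b (V ψ)}).topologicalClosure = ⊤) :
    ∃ W : K →L[ℂ] K₁,
      (∀ x, ‖W x‖ = ‖x‖) ∧
      (∀ b : B, W.comp (π b) = (π₁ b).comp W) ∧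
      W.comp V = V₁ := by
  classical
  set S : Set K := {x : K | ∃ (b : B) (ψ : H), x = π b (V ψ)} with hS
  set g : B × H → K := fun p => π p.1 (V p.2) with hg
  set g₁ : B × H → K₁ := fun p => π₁ p.1 (V₁ p.2) with hg₁
  set φ : ((B × H) →₀ ℂ) →ₗ[ℂ] K := Finsupp.linearCombination ℂ g with hφ
  set φ₁ : ((B × H) →₀ ℂ) →ₗ[ℂ] K₁ := Finsupp.linearCombination ℂ g₁ with hφ₁
  -- inner products of generators agree
  have hgen : ∀ p q : B × H, ⟪g₁ p, g₁ q⟫_ℂ = ⟪g p, g q⟫_ℂ := by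
    rintro ⟨b, ψ⟩ ⟨c, χ⟩
    show ⟪π₁ b (V₁ ψ), π₁ c (V₁ χ)⟫_ℂ = ⟪π b (V ψ), π c (V χ)⟫_ℂ
    rw [stinespring_inner_aux π V b c ψ χ, stinespring_inner_aux π₁ V₁ b c ψ χ, heq]
  have hφinner : ∀ f f' : (B × H) →₀ ℂ, ⟪φ₁ f, φ₁ f'⟫_ℂ = ⟪φ f, φ f'⟫_ℂ := by
    intro f f'
    rw [hφ, hφ₁, Finsupp.linearCombination_apply, Finsupp.linearCombination_apply,
      Finsupp.linearCombination_apply, Finsupp.linearCombination_apply,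
      Finsupp.sum, Finsupp.sum, Finsupp.sum, Finsupp.sum,
      sum_inner, sum_inner]
    refine Finset.sum_congr rfl fun p _ => ?_
    rw [inner_sum, inner_sum]
    refine Finset.sum_congr rfl fun q _ => ?_
    rw [inner_smul_left, inner_smul_left, inner_smul_right, inner_smul_right, hgen]
  have hφnorm : ∀ f : (B × H) →₀ ℂ, ‖φ₁ f‖ = ‖φ f‖ := by
    intro f
    rw [norm_eq_sqrt_re_inner (𝕜 := ℂ), norm_eq_sqrt_re_inner (𝕜 := ℂ), hφinner]
  have hker : LinearMap.ker φ ≤ LinearMap.ker φ₁ := by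
    intro f hf
    rw [LinearMap.mem_ker] at hf ⊢
    rw [← norm_eq_zero, hφnorm, hf, norm_zero]
  -- the map on the range of φ
  set q : (((B × H) →₀ ℂ) ⧸ LinearMap.ker φ) →ₗ[ℂ] K₁ :=
    (LinearMap.ker φ).liftQ φ₁ hker with hq
  set eK := φ.quotKerEquivRange with heK
  set W₀lin : LinearMap.range φ →ₗ[ℂ] K₁ := q.comp eK.symm.toLinearMap with hW₀lin
  have hW₀ : ∀ (f : (B × H) →₀ ℂ) (hf : φ f ∈ LinearMap.range φ),
      W₀lin ⟨φ f, hf⟩ = φ₁ f := by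
    intro f hf
    have h1 : eK (Submodule.Quotient.mk f) = ⟨φ f, hf⟩ := by
      rw [heK]
      exact Subtype.ext (LinearMap.quotKerEquivRange_apply_mk φ f)
    rw [hW₀lin]
    simp only [LinearMap.comp_apply, LinearEquiv.coe_toLinearMap]
    rw [← h1, LinearEquiv.symm_apply_apply, hq, Submodule.liftQ_apply]
  have hW₀norm : ∀ x : LinearMap.range φ, ‖W₀lin x‖ = ‖x‖ := by
    rintro ⟨y, hy⟩
    obtain ⟨f, rfl⟩ := hy
    rw [hW₀ f ⟨f, rfl⟩, hφnorm]
    rfl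
  set W₀ : (LinearMap.range φ) →L[ℂ] K₁ :=
    W₀lin.mkContinuous 1 (fun x => by rw [hW₀norm, one_mul]) with hW₀def
  set e : (LinearMap.range φ) →L[ℂ] K := (LinearMap.range φ).subtypeL with he
  have hrange : LinearMap.range φ = Submodule.span ℂ S := by
    rw [hφ, Finsupp.range_linearCombination]
    congr 1
    ext x
    constructor
    · rintro ⟨⟨b, ψ⟩, rfl⟩; exact ⟨b, ψ, rfl⟩
    · rintro ⟨b, ψ, rfl⟩; exact ⟨⟨b, ψ⟩, rfl⟩
  have hdenseS : Dense ((Submodule.span ℂ S : Submodule ℂ K) : Set K) := by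
    rw [dense_iff_closure_eq, ← Submodule.topologicalClosure_coe, hmin]
    rfl
  have hdense : DenseRange e := by
    have : Set.range e = ((LinearMap.range φ : Submodule ℂ K) : Set K) := Subtype.range_coe
    rw [DenseRange, this, hrange]
    exact hdenseS
  have h_e : IsUniformInducing e := isometry_subtype_coe.isUniformInducing
  set W : K →L[ℂ] K₁ := W₀.extend e with hW
  have hWe : ∀ x, W (e x) = W₀ x := fun x =>
    ContinuousLinearMap.extend_eq (f := W₀) (e := e) hdense h_e x
  have hWφ : ∀ f : (B × H) →₀ ℂ, W (φ f) = φ₁ f := by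
    intro f
    have := hWe ⟨φ f, ⟨f, rfl⟩⟩
    rw [he] at this
    simpa [hW₀def, LinearMap.mkContinuous_apply, hW₀ f ⟨f, rfl⟩] using this
  have hWgen : ∀ (b : B) (ψ : H), W (π b (V ψ)) = π₁ b (V₁ ψ) := by
    intro b ψ
    have := hWφ (Finsupp.single (b, ψ) 1)
    rwa [hφ, hφ₁, Finsupp.linearCombination_single, Finsupp.linearCombination_single,
      one_smul, one_smul] at this
  refine ⟨W, ?_, ?_, ?_⟩
  · -- isometry
    have hfun : (fun x : K => ‖W x‖) = fun x => ‖x‖ := by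
      refine hdense.equalizer (continuous_norm.comp W.continuous) continuous_norm ?_
      funext z
      simp only [Function.comp_apply, hWe z]
      rw [show ‖W₀ z‖ = ‖W₀lin z‖ from rfl, hW₀norm]
      rfl
    exact fun x => congrFun hfun x
  · -- intertwining
    intro b
    refine ContinuousLinearMap.ext_on (hdenseS) ?_
    rintro x ⟨c, ψ, rfl⟩
    simp only [ContinuousLinearMap.comp_apply]
    rw [← ContinuousLinearMap.comp_apply (π b) (π c), ← ContinuousLinearMap.mul_def,
      ← map_mul, hWgen, hWgen, map_mul]
    rfl
  · -- W V = V₁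
    ext ψ
    simp only [ContinuousLinearMap.comp_apply]
    have h1 : V ψ = π 1 (V ψ) := by rw [map_one]; rfl
    rw [h1, hWgen, map_one]
    rfl
end

section
/- Let d_A, d_B, d_M be positive integers and let V be a complex matrix with rows indexed by Fin d_B × Fin d_M and columns indexed by Fin d_M × Fin d_A such that VᴴV = 1 (V is an isometry from ℂ^{d_M} ⊗ ℂ^{d_A} to ℂ^{d_B} ⊗ ℂ^{d_M}). Let μ be a d_M × d_M positive semidefinite complex matrix with trace 1 (a memory state). Then there exist d_M² matrices s_{αβ} (α, β ∈ Fin d_M) with d_B rows and d_A columns such that (i) for every d_A × d_A matrix ρ and every d_B × d_B matrix b, tr( (μ ⊗ ρ) · Vᴴ · (b ⊗ 1_{d_M}) · V ) = Σ_{α,β} tr( ρ · s_{αβ}ᴴ · b · s_{αβ} ), and (ii) there exist an orthonormal family φ_1, …, φ_m in ℂ^{d_A} with m = ⌊d_A / 2^{d_M⁴}⌋ and complex numbers ω_{(α,β),(α',β')} such that the Knill–Laflamme conditions ⟨φ_γ, s_{αβ}ᴴ s_{α'β'} φ_δ⟩ = ω_{(α,β),(α',β')} · δ_{γδ} hold for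 all α, β, α', β' ∈ Fin d_M and all γ, δ ∈ {1,…,m}. (Thus, independently of the memory state μ, the restricted pure memory channel admits a perfectly correctable quantum code of dimension at least ⌊d_A / 2^{d_M⁴}⌋.) -/
open scoped Kronecker Matrix ComplexOrder InnerProductSpace

section
variable {E : Type*} [NormedAddCommGroup E] [InnerProductSpace ℂ E]

lemma scalar_on_span {m : ℕ} (A : E →ₗ[ℂ] E) (c : ℂ) (ψ : Fin m → E)
    (h : ∀ k l, ⟪ψ k, A (ψ l)⟫_ℂ = c * ⟪ψ k, ψ l⟫_ℂ) :
    ∀ u ∈ Submodule.span ℂ (Set.range ψ), ∀ v ∈ Submodule.span ℂ (Set.range ψ),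
      ⟪u, A v⟫_ℂ = c * ⟪u, v⟫_ℂ := by
  intro u hu v hv
  induction hu using Submodule.span_induction with
  | mem x hx =>
    induction hv using Submodule.span_induction with
    | mem y hy =>
      obtain ⟨k, rfl⟩ := hx
      obtain ⟨l, rfl⟩ := hy
      exact h k l
    | zero => simp
    | add y z _ _ hy hz => simp [inner_add_right, map_add, hy, hz]; ring
    | smul a y _ hy => simp [inner_smul_right, map_smul, hy]; ring
  | zero => simp
  | add x y _ _ hx hy => simp [inner_add_left, hx, hy]; ring
  | smul a x _ hx => simp [inner_smul_left, hx]; ring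

variable {E : Type*} [NormedAddCommGroup E] [InnerProductSpace ℂ E]
lemma pair_compress {n : ℕ} (A : E →ₗ[ℂ] E) (S : Submodule ℂ E)
    (hm : 0 < n / 2) (h2m : 2 * (n / 2) ≤ n)
    (e : Fin n → ℝ) (hmono : Monotone e)
    (w : Fin n → E)
    (hw1 : ∀ i j, ⟪w i, w j⟫_ℂ = if i = j then 1 else 0)
    (hw2 : ∀ i j, ⟪w i, A (w j)⟫_ℂ = (e j : ℂ) * (if i = j then 1 else 0))
    (hwspan : ∀ j, w j ∈ S) :
    ∃ ψ : Fin (n / 2) → E, Orthonormal ℂ ψ ∧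
      (∀ k, ψ k ∈ S) ∧
      ∃ c : ℂ, ∀ k l, ⟪ψ k, A (ψ l)⟫_ℂ = c * (if k = l then 1 else 0) := by
  have hmn : n / 2 < n := by omega
  set p : Fin (n/2) → Fin n := fun k => ⟨k.1, by omega⟩ with hpdef
  set q : Fin (n/2) → Fin n := fun k => ⟨n - 1 - k.1, by omega⟩ with hqdef
  set cr : ℝ := e ⟨n / 2, hmn⟩ with hcrdef
  have hpc : ∀ k, e (p k) ≤ cr := fun k => hmono (by simp only [hpdef, Fin.mk_le_mk]; omega)
  have hqc : ∀ k, cr ≤ e (q k) := fun k => hmono (by simp only [hqdef, Fin.mk_le_mk]; omega)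
  set t : Fin (n/2) → ℝ := fun k =>
    if e (q k) ≤ e (p k) then 1 else (cr - e (p k)) / (e (q k) - e (p k)) with htdef
  have ht : ∀ k, 0 ≤ t k ∧ t k ≤ 1 ∧ (1 - t k) * e (p k) + t k * e (q k) = cr := by
    intro k
    simp only [htdef]
    by_cases h : e (q k) ≤ e (p k)
    · have h2 : e (q k) = cr := le_antisymm (h.trans (hpc k)) (hqc k)
      rw [if_pos h]
      exact ⟨zero_le_one, le_refl 1, by rw [h2]; ring⟩
    · push_neg at h
      rw [if_neg (not_le.mpr h)]
      have hd : e (q k) - e (p k) ≠ 0 := by intro hc; linarith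
      refine ⟨div_nonneg (by have := hpc k; linarith) (by linarith), ?_, ?_⟩
      · rw [div_le_one (by linarith)]; have := hqc k; linarith
      · have hmul : (cr - e (p k)) / (e (q k) - e (p k)) * (e (q k) - e (p k)) = cr - e (p k) :=
          div_mul_cancel₀ _ hd
        nlinarith [hmul]
  set a : Fin (n/2) → ℝ := fun k => Real.sqrt (1 - t k) with hadef
  set b : Fin (n/2) → ℝ := fun k => Real.sqrt (t k) with hbdef
  have ha2 : ∀ k, a k ^ 2 = 1 - t k := fun k => Real.sq_sqrt (by linarith [(ht k).2.1])
  have hb2 : ∀ k, b k ^ 2 = t k := fun k => Real.sq_sqrt (ht k).1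
  set ψ : Fin (n/2) → E := fun k => (a k : ℂ) • w (p k) + (b k : ℂ) • w (q k) with hψdef
  have hpq : ∀ k l : Fin (n/2), p k ≠ q l := by
    intro k l h
    have := congrArg Fin.val h
    simp only [hpdef, hqdef] at this
    omega
  have hpp : ∀ k l : Fin (n/2), (p k = p l) ↔ k = l := by
    intro k l
    constructor
    · intro h; have := congrArg Fin.val h; simp only [hpdef] at this; exact Fin.ext this
    · rintro rfl; rfl
  have hqq : ∀ k l : Fin (n/2), (q k = q l) ↔ k = l := by
    intro k l
    constructor
    · intro h; have := congrArg Fin.val h; simp only [hqdef] at this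
      exact Fin.ext (by omega)
    · rintro rfl; rfl
  have hinner : ∀ k l, ⟪ψ k, ψ l⟫_ℂ = if k = l then 1 else 0 := by
    intro k l
    rw [hψdef]
    simp only [inner_add_left, inner_add_right, inner_smul_left, inner_smul_right,
      Complex.conj_ofReal, hw1]
    rw [if_neg (hpq k l), if_neg (Ne.symm (hpq l k))]
    simp only [hpp k l, hqq k l]
    by_cases hkl : k = l
    · subst hkl
      simp
      norm_cast
      nlinarith [ha2 k, hb2 k]
    · simp [if_neg hkl]
  have hAinner : ∀ k l, ⟪ψ k, A (ψ l)⟫_ℂ = (cr : ℂ) * (if k = l then 1 else 0) := by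
    intro k l
    rw [hψdef]
    simp only [map_add, map_smul, inner_add_left, inner_add_right, inner_smul_left,
      inner_smul_right, Complex.conj_ofReal, hw2]
    rw [if_neg (hpq k l), if_neg (Ne.symm (hpq l k))]
    simp only [hpp k l, hqq k l]
    by_cases hkl : k = l
    · subst hkl
      simp
      norm_cast
      have h1 : a k * a k = 1 - t k := by have := ha2 k; nlinarith
      have h2 : b k * b k = t k := by have := hb2 k; nlinarith
      linear_combination e (p k) * h1 + e (q k) * h2 + (ht k).2.2
    · simp [if_neg hkl]
  exact ⟨ψ, orthonormal_iff_ite.mpr hinner,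
    fun k => Submodule.add_mem _ (Submodule.smul_mem _ _ (hwspan _))
      (Submodule.smul_mem _ _ (hwspan _)), (cr : ℂ), hAinner⟩


variable {E : Type*} [NormedAddCommGroup E] [InnerProductSpace ℂ E]

lemma compress_step {n : ℕ} (A : E →ₗ[ℂ] E) (hA : ∀ x y : E, ⟪A x, y⟫_ℂ = ⟪x, A y⟫_ℂ)
    (φ : Fin n → E) (hφ : Orthonormal ℂ φ) :
    ∃ ψ : Fin (n / 2) → E, Orthonormal ℂ ψ ∧
      (∀ k, ψ k ∈ Submodule.span ℂ (Set.range φ)) ∧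
      ∃ c : ℂ, ∀ k l, ⟪ψ k, A (ψ l)⟫_ℂ = c * (if k = l then 1 else 0) := by
  rcases Nat.eq_zero_or_pos (n / 2) with hm | hm
  · exact ⟨fun _ => 0, orthonormal_iff_ite.mpr fun i => absurd i.2 (by omega),
      fun k => absurd k.2 (by omega), 0, fun k => absurd k.2 (by omega)⟩
  have h2m : 2 * (n / 2) ≤ n := by omega
  set M : Matrix (Fin n) (Fin n) ℂ := fun i j => ⟪φ i, A (φ j)⟫_ℂ with hMdef
  have hM : M.IsHermitian := by
    refine Matrix.IsHermitian.ext fun i j => ?_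
    simp only [hMdef]
    have hcs := inner_conj_symm (𝕜 := ℂ) (A (φ i)) (φ j)
    rw [← hA (φ i) (φ j)]
    exact hcs
  set σ := Tuple.sort hM.eigenvalues with hσdef
  set e : Fin n → ℝ := hM.eigenvalues ∘ σ with hedef
  have hmono : Monotone e := Tuple.monotone_sort hM.eigenvalues
  set u : Fin n → EuclideanSpace ℂ (Fin n) := fun j => hM.eigenvectorBasis (σ j) with hudef
  have hu : Orthonormal ℂ u := hM.eigenvectorBasis.orthonormal.comp σ σ.injective
  have inner_uu : ∀ i j, (∑ t, (starRingEnd ℂ) (u i t) * u j t) = if i = j then 1 else 0 := by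
    intro i j
    have h := orthonormal_iff_ite.mp hu i j
    rw [PiLp.inner_apply] at h
    simpa [mul_comm] using h
  have hMv : ∀ j s, (∑ t, M s t * u j t) = (e j : ℂ) * u j s := by
    intro j s
    have hs := congrFun (hM.mulVec_eigenvectorBasis (σ j)) s
    simp only [Matrix.mulVec, dotProduct, Pi.smul_apply,
      Complex.real_smul] at hs
    exact hs
  set w : Fin n → E := fun j => ∑ t, (u j) t • φ t with hwdef
  have hφite : ∀ s t, ⟪φ s, φ t⟫_ℂ = if s = t then 1 else 0 := orthonormal_iff_ite.mp hφ
  have hcollapse : ∀ i t, (∑ s, (starRingEnd ℂ) ((u i) s) * ⟪φ s, φ t⟫_ℂ)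
      = (starRingEnd ℂ) ((u i) t) := by
    intro i t
    rw [Finset.sum_eq_single t]
    · rw [hφite t t, if_pos rfl, mul_one]
    · intro s _ hst; rw [hφite s t, if_neg hst, mul_zero]
    · intro h; exact absurd (Finset.mem_univ t) h
  have hw1 : ∀ i j, ⟪w i, w j⟫_ℂ = if i = j then 1 else 0 := by
    intro i j
    rw [hwdef]
    simp only [sum_inner, inner_sum, inner_smul_left, inner_smul_right]
    calc (∑ t, (u j) t * ∑ s, (starRingEnd ℂ) ((u i) s) * ⟪φ s, φ t⟫_ℂ)
        = ∑ t, (starRingEnd ℂ) ((u i) t) * (u j) t := by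
          refine Finset.sum_congr rfl fun t _ => ?_
          rw [hcollapse i t]; ring
      _ = if i = j then 1 else 0 := inner_uu i j
  have hw2 : ∀ i j, ⟪w i, A (w j)⟫_ℂ = (e j : ℂ) * (if i = j then 1 else 0) := by
    intro i j
    rw [hwdef]
    simp only [map_sum, map_smul, sum_inner, inner_sum, inner_smul_left, inner_smul_right]
    calc (∑ t, (u j) t * ∑ s, (starRingEnd ℂ) ((u i) s) * ⟪φ s, A (φ t)⟫_ℂ)
        = ∑ t, ∑ s, (starRingEnd ℂ) ((u i) s) * (M s t * (u j) t) := by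
          refine Finset.sum_congr rfl fun t _ => ?_
          rw [Finset.mul_sum]
          exact Finset.sum_congr rfl fun s _ => by rw [hMdef]; ring
      _ = ∑ s, (starRingEnd ℂ) ((u i) s) * ∑ t, M s t * (u j) t := by
          rw [Finset.sum_comm]
          exact Finset.sum_congr rfl fun s _ => by rw [Finset.mul_sum]
      _ = ∑ s, (starRingEnd ℂ) ((u i) s) * ((e j : ℂ) * (u j) s) := by
          exact Finset.sum_congr rfl fun s _ => by rw [hMv j s]
      _ = (e j : ℂ) * ∑ s, (starRingEnd ℂ) ((u i) s) * (u j) s := by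
          rw [Finset.mul_sum]
          exact Finset.sum_congr rfl fun s _ => by ring
      _ = (e j : ℂ) * (if i = j then 1 else 0) := by rw [inner_uu i j]
  have hwspan : ∀ j, w j ∈ Submodule.span ℂ (Set.range φ) := by
    intro j
    rw [hwdef]
    exact Submodule.sum_mem _ fun t _ =>
      Submodule.smul_mem _ _ (Submodule.subset_span ⟨t, rfl⟩)
  exact pair_compress A _ hm h2m e hmono w hw1 hw2 hwspan

lemma compress_iter (g : ℕ → (E →ₗ[ℂ] E)) (hg : ∀ i x y, ⟪g i x, y⟫_ℂ = ⟪x, g i y⟫_ℂ)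
    (N : ℕ) : ∀ (n : ℕ) (φ : Fin n → E), Orthonormal ℂ φ →
    ∃ ψ : Fin (n / 2 ^ N) → E, Orthonormal ℂ ψ ∧
      (∀ k, ψ k ∈ Submodule.span ℂ (Set.range φ)) ∧
      ∀ i < N, ∃ c : ℂ, ∀ k l, ⟪ψ k, g i (ψ l)⟫_ℂ = c * (if k = l then 1 else 0) := by
  induction N with
  | zero =>
    intro n φ hφ
    refine ⟨fun k => φ (Fin.cast (show n / 2 ^ 0 = n by simp) k), hφ.comp _ (Fin.cast_injective (show n / 2 ^ 0 = n by simp)),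
      fun k => Submodule.subset_span ⟨_, rfl⟩,
      fun i hi => absurd hi (by omega)⟩
  | succ N ih =>
    intro n φ hφ
    obtain ⟨ψ, hψon, hψspan, hψc⟩ := ih n φ hφ
    obtain ⟨χ, hχon, hχspan, c, hc⟩ := compress_step (g N)
      (fun x y => hg N x y) ψ hψon
    have hcast : n / 2 ^ N / 2 = n / 2 ^ (N + 1) := by
      rw [Nat.div_div_eq_div_mul, pow_succ]
    refine ⟨fun k => χ (Fin.cast hcast.symm k), hχon.comp _ (Fin.cast_injective hcast.symm), ?_, ?_⟩
    · intro k
      refine Submodule.span_le.mpr ?_ (hχspan _)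
      rintro x ⟨j, rfl⟩
      exact hψspan j
    · intro i hi
      rcases Nat.lt_succ_iff_lt_or_eq.mp hi with hiN | rfl
      · obtain ⟨ci, hci⟩ := hψc i hiN
        refine ⟨ci, fun k l => ?_⟩
        have hext := scalar_on_span (g i) ci ψ
          (fun a b => by rw [hci a b, orthonormal_iff_ite.mp hψon])
        have := hext _ (hχspan (Fin.cast hcast.symm k)) _ (hχspan (Fin.cast hcast.symm l))
        rw [this, orthonormal_iff_ite.mp hχon]
        congr 1
        simp [Fin.ext_iff]
      · refine ⟨c, fun k l => ?_⟩
        rw [hc]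
        congr 1
        simp [Fin.ext_iff]
end

lemma kraus_trace_identity (dA dB dM : ℕ)
    (V : Matrix (Fin dB × Fin dM) (Fin dM × Fin dA) ℂ)
    (lam : Fin dM → ℝ)
    (u : Fin dM → EuclideanSpace ℂ (Fin dM))
    (μ : Matrix (Fin dM) (Fin dM) ℂ)
    (hdecomp : ∀ m m', μ m m' = ∑ β, (lam β : ℂ) * (u β m * star (u β m')))
    (hlam : ∀ β, 0 ≤ lam β)
    (s : Fin dM → Fin dM → Matrix (Fin dB) (Fin dA) ℂ)
    (hs : ∀ α β bb a, s α β bb a = (Real.sqrt (lam β) : ℂ) * ∑ m, V (bb, α) (m, a) * u β m)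
    (ρ : Matrix (Fin dA) (Fin dA) ℂ) (b : Matrix (Fin dB) (Fin dB) ℂ) :
    ((μ ⊗ₖ ρ) * (Vᴴ * ((b ⊗ₖ (1 : Matrix (Fin dM) (Fin dM) ℂ)) * V))).trace
      = ∑ α : Fin dM, ∑ β : Fin dM, (ρ * ((s α β)ᴴ * (b * s α β))).trace := by
  have key : (∑ x : Fin dM × Fin dA × Fin dM × Fin dA × Fin dB × Fin dM × Fin dB × Fin dM,
      (lam x.2.2.2.2.2.2.2 : ℂ) * (u x.2.2.2.2.2.2.2 x.1 * (starRingEnd ℂ) (u x.2.2.2.2.2.2.2 x.2.2.1)) * ρ x.2.1 x.2.2.2.1 *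
        ((starRingEnd ℂ) (V (x.2.2.2.2.1, x.2.2.2.2.2.1) (x.2.2.1, x.2.2.2.1)) *
          (b x.2.2.2.2.1 x.2.2.2.2.2.2.1 * 1 * V (x.2.2.2.2.2.2.1, x.2.2.2.2.2.1) (x.1, x.2.1))))
      = (∑ y : Fin dM × Fin dM × Fin dA × Fin dA × Fin dB × Fin dB × Fin dM × Fin dM,
      ρ y.2.2.1 y.2.2.2.1 *
        ((Real.sqrt (lam y.2.1) : ℂ) * ((starRingEnd ℂ) (V (y.2.2.2.2.1, y.1) (y.2.2.2.2.2.2.2, y.2.2.2.1)) * (starRingEnd ℂ) (u y.2.1 y.2.2.2.2.2.2.2)) *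
          (b y.2.2.2.2.1 y.2.2.2.2.2.1 * ((Real.sqrt (lam y.2.1) : ℂ) * (V (y.2.2.2.2.2.1, y.1) (y.2.2.2.2.2.2.1, y.2.2.1) * u y.2.1 y.2.2.2.2.2.2.1))))) := by
    refine Fintype.sum_equiv
      ⟨fun x => (x.2.2.2.2.2.1, x.2.2.2.2.2.2.2, x.2.1, x.2.2.2.1, x.2.2.2.2.1,
          x.2.2.2.2.2.2.1, x.1, x.2.2.1),
       fun y => (y.2.2.2.2.2.2.1, y.2.2.1, y.2.2.2.2.2.2.2, y.2.2.2.1, y.2.2.2.2.1, y.1,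
          y.2.2.2.2.2.1, y.2.1),
       fun x => rfl, fun y => rfl⟩ _ _ ?_
    rintro ⟨m, a, m', a', b1, k, b2, β⟩
    have h2 : (Real.sqrt (lam β) : ℂ) * Real.sqrt (lam β) = (lam β : ℂ) := by
      rw [← Complex.ofReal_mul, Real.mul_self_sqrt (hlam β)]
    simp only [Equiv.coe_fn_mk]
    linear_combination (-(u β m) * (starRingEnd ℂ) (u β m') * ρ a a' *
      (starRingEnd ℂ) (V (b1, k) (m', a')) * b b1 b2 * V (b2, k) (m, a)) * h2
  calc ((μ ⊗ₖ ρ) * (Vᴴ * ((b ⊗ₖ (1 : Matrix (Fin dM) (Fin dM) ℂ)) * V))).trace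
      = ∑ x : Fin dM × Fin dA × Fin dM × Fin dA × Fin dB × Fin dM × Fin dB × Fin dM,
      (lam x.2.2.2.2.2.2.2 : ℂ) * (u x.2.2.2.2.2.2.2 x.1 * (starRingEnd ℂ) (u x.2.2.2.2.2.2.2 x.2.2.1)) * ρ x.2.1 x.2.2.2.1 *
        ((starRingEnd ℂ) (V (x.2.2.2.2.1, x.2.2.2.2.2.1) (x.2.2.1, x.2.2.2.1)) *
          (b x.2.2.2.2.1 x.2.2.2.2.2.2.1 * 1 * V (x.2.2.2.2.2.2.1, x.2.2.2.2.2.1) (x.1, x.2.1))) := by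
        simp only [Matrix.trace, Matrix.diag, Matrix.mul_apply, Matrix.conjTranspose_apply,
          Matrix.kroneckerMap_apply, Matrix.one_apply, mul_ite, mul_zero, ite_mul, zero_mul,
          Finset.sum_ite_eq, Finset.sum_ite_eq', Finset.mem_univ, if_true,
          Fintype.sum_prod_type, hdecomp, star_sum, star_mul', Complex.star_def,
          Complex.conj_ofReal, map_sum, map_mul, Finset.mul_sum, Finset.sum_mul]
    _ = _ := by
        rw [key]
        simp only [Matrix.trace, Matrix.diag, Matrix.mul_apply, Matrix.conjTranspose_apply,
          Matrix.kroneckerMap_apply, Matrix.one_apply, mul_ite, mul_zero, ite_mul, zero_mul,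
          Finset.sum_ite_eq, Finset.sum_ite_eq', Finset.mem_univ, if_true,
          Fintype.sum_prod_type, hs, star_sum, star_mul', Complex.star_def,
          Complex.conj_ofReal, map_sum, map_mul, Finset.mul_sum, Finset.sum_mul]


lemma code_exists (dA dB dM : ℕ) (s : Fin dM → Fin dM → Matrix (Fin dB) (Fin dA) ℂ) :
    ∃ φ : Fin (dA / 2 ^ dM ^ 4) → EuclideanSpace ℂ (Fin dA),
      Orthonormal ℂ φ ∧
        ∃ ω : (Fin dM × Fin dM) → (Fin dM × Fin dM) → ℂ,
          ∀ (α β α' β' : Fin dM) (γ δ : Fin (dA / 2 ^ dM ^ 4)),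
            ⟪φ γ, Matrix.toEuclideanLin ((s α β)ᴴ * s α' β') (φ δ)⟫_ℂ
              = ω (α, β) (α', β') * (if γ = δ then 1 else 0) := by
  classical
  set T : Fin (dM*dM) → Fin (dM*dM) → Matrix (Fin dA) (Fin dA) ℂ := fun p q =>
    (s (finProdFinEquiv.symm p).1 (finProdFinEquiv.symm p).2)ᴴ *
      s (finProdFinEquiv.symm q).1 (finProdFinEquiv.symm q).2 with hTdef
  have hTadj : ∀ p q, (T p q)ᴴ = T q p := fun p q => by
    simp only [hTdef, Matrix.conjTranspose_mul, Matrix.conjTranspose_conjTranspose]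
  set Nm : Fin (dM*dM) → Fin (dM*dM) → Matrix (Fin dA) (Fin dA) ℂ := fun p q =>
    if p ≤ q then T p q + (T p q)ᴴ else Complex.I • (T p q - (T p q)ᴴ) with hNmdef
  have hNherm : ∀ p q, (Nm p q)ᴴ = Nm p q := by
    intro p q
    simp only [hNmdef]
    by_cases h : p ≤ q
    · rw [if_pos h, Matrix.conjTranspose_add, Matrix.conjTranspose_conjTranspose, add_comm]
    · rw [if_neg h, Matrix.conjTranspose_smul, Matrix.conjTranspose_sub,
        Matrix.conjTranspose_conjTranspose]
      rw [show star Complex.I = -Complex.I from Complex.conj_I]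
      rw [neg_smul, ← smul_neg, neg_sub]
  set g : ℕ → (EuclideanSpace ℂ (Fin dA) →ₗ[ℂ] EuclideanSpace ℂ (Fin dA)) := fun i =>
    if h : i < dM*dM*(dM*dM) then
      Matrix.toEuclideanLin (Nm (finProdFinEquiv.symm (⟨i, h⟩ : Fin (dM*dM*(dM*dM)))).1
        (finProdFinEquiv.symm (⟨i, h⟩ : Fin (dM*dM*(dM*dM)))).2)
    else 0 with hgdef
  have key_adj : ∀ (X : Matrix (Fin dA) (Fin dA) ℂ) (x y : EuclideanSpace ℂ (Fin dA)),
      ⟪x, Matrix.toEuclideanLin Xᴴ y⟫_ℂ = (starRingEnd ℂ) ⟪y, Matrix.toEuclideanLin X x⟫_ℂ := by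
    intro X x y
    rw [Matrix.toEuclideanLin_conjTranspose_eq_adjoint, LinearMap.adjoint_inner_right,
      inner_conj_symm]
  have hg : ∀ i (x y : EuclideanSpace ℂ (Fin dA)), ⟪g i x, y⟫_ℂ = ⟪x, g i y⟫_ℂ := by
    intro i x y
    simp only [hgdef]
    by_cases h : i < dM*dM*(dM*dM)
    · rw [dif_pos h]
      set X := Nm (finProdFinEquiv.symm (⟨i, h⟩ : Fin (dM*dM*(dM*dM)))).1
        (finProdFinEquiv.symm (⟨i, h⟩ : Fin (dM*dM*(dM*dM)))).2 with hXdef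
      have hXh : Xᴴ = X := hNherm _ _
      rw [← inner_conj_symm, ← hXh, key_adj, hXh]
      simp
    · rw [dif_neg h]
      simp
  obtain ⟨ψ, hψon, _, hψc⟩ := compress_iter g hg (dM*dM*(dM*dM)) dA
    (fun i => EuclideanSpace.basisFun (Fin dA) ℂ i)
    (EuclideanSpace.basisFun (Fin dA) ℂ).orthonormal
  have hex : ∀ p q : Fin (dM*dM), ∃ c : ℂ, ∀ k l,
      ⟪ψ k, Matrix.toEuclideanLin (Nm p q) (ψ l)⟫_ℂ = c * (if k = l then 1 else 0) := by
    intro p q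
    have hlt : ((finProdFinEquiv (p, q) : Fin (dM*dM*(dM*dM))) : ℕ) < dM*dM*(dM*dM) :=
      (finProdFinEquiv (p, q)).2
    obtain ⟨c, hcc⟩ := hψc _ hlt
    refine ⟨c, fun k l => ?_⟩
    have h2 := hcc k l
    rw [hgdef] at h2
    simp only [dif_pos hlt, Fin.eta, Equiv.symm_apply_apply] at h2
    exact h2
  choose c hc using hex
  set ωf : Fin (dM*dM) → Fin (dM*dM) → ℂ := fun p q =>
    if p = q then c p p / 2 else (c p q + Complex.I * c q p) / 2 with hωfdef
  have master_le : ∀ p q, p ≤ q → ∀ k l,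
      ⟪ψ k, Matrix.toEuclideanLin (T p q) (ψ l)⟫_ℂ = ωf p q * (if k = l then 1 else 0) := by
    intro p q hpq k l
    rcases eq_or_lt_of_le hpq with rfl | hlt
    · have eq1 := hc p p k l
      rw [show Nm p p = T p p + (T p p)ᴴ by simp only [hNmdef]; rw [if_pos (le_refl p)]] at eq1
      rw [hTadj p p, map_add, LinearMap.add_apply, inner_add_right] at eq1
      simp only [hωfdef, if_pos rfl]
      linear_combination eq1 / 2
    · have hne : p ≠ q := ne_of_lt hlt
      have hqp : ¬ q ≤ p := not_le.mpr hlt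
      have eq1 := hc p q k l
      have eq2 := hc q p k l
      rw [show Nm p q = T p q + (T p q)ᴴ by simp only [hNmdef]; rw [if_pos hpq],
        map_add, LinearMap.add_apply, inner_add_right] at eq1
      rw [show Nm q p = Complex.I • (T q p - (T q p)ᴴ) by simp only [hNmdef]; rw [if_neg hqp],
        ← hTadj p q, Matrix.conjTranspose_conjTranspose, map_smul, LinearMap.smul_apply,
        inner_smul_right, map_sub, LinearMap.sub_apply, inner_sub_right] at eq2
      simp only [hωfdef, if_neg hne]
      linear_combination eq1 / 2 + Complex.I / 2 * eq2 +
        (⟪ψ k, (Matrix.toEuclideanLin (T p q)) (ψ l)⟫_ℂ -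
          ⟪ψ k, (Matrix.toEuclideanLin (T p q)ᴴ) (ψ l)⟫_ℂ) / 2 * Complex.I_sq
  set ωc : Fin (dM*dM) → Fin (dM*dM) → ℂ := fun p q =>
    if p ≤ q then ωf p q else (starRingEnd ℂ) (ωf q p) with hωcdef
  have master : ∀ p q k l, ⟪ψ k, Matrix.toEuclideanLin (T p q) (ψ l)⟫_ℂ
      = ωc p q * (if k = l then 1 else 0) := by
    intro p q k l
    simp only [hωcdef]
    by_cases h : p ≤ q
    · rw [if_pos h]; exact master_le p q h k l
    · rw [if_neg h]
      have hle : q ≤ p := le_of_not_ge h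
      have h1 := master_le q p hle l k
      rw [← hTadj q p, key_adj, h1, map_mul]
      congr 1
      by_cases hkl : k = l
      · subst hkl; simp
      · rw [if_neg hkl, if_neg (fun hh => hkl hh.symm), map_zero]
  have hdim : dA / 2 ^ dM ^ 4 = dA / 2 ^ (dM*dM*(dM*dM)) := by ring_nf
  refine ⟨fun γ => ψ (Fin.cast hdim γ), hψon.comp _ (Fin.cast_injective hdim),
    fun i j => ωc (finProdFinEquiv i) (finProdFinEquiv j), ?_⟩
  intro α β α' β' γ δ
  have hT : T (finProdFinEquiv (α, β)) (finProdFinEquiv (α', β')) = (s α β)ᴴ * s α' β' := by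
    simp only [hTdef, Equiv.symm_apply_apply]
  rw [← hT, master]
  congr 1
  by_cases hgd : γ = δ
  · subst hgd; rw [if_pos rfl, if_pos rfl]
  · rw [if_neg hgd, if_neg (fun hh => hgd (Fin.cast_injective hdim hh))]


/-- The restriction of a pure quantum memory channel `S(b ⊗ m) = Vᴴ (b ⊗ m) V`
to the `B`-system with fixed initial memory state `μ` admits a Kraus
representation with `d_M²` Kraus operators `s α β`, and these Kraus operators
satisfy the Knill–Laflamme conditions on an orthonormal family of size
`⌊d_A / 2^(d_M⁴)⌋` in `ℂ^{d_A}`: independently of `μ`, the restricted channel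
has a perfectly correctable quantum code of dimension at least
`⌊d_A / 2^(d_M⁴)⌋`. -/
theorem pure_memory_channel_code
    (dA dB dM : ℕ) (hA : 0 < dA) (hB : 0 < dB) (hM : 0 < dM)
    (V : Matrix (Fin dB × Fin dM) (Fin dM × Fin dA) ℂ)
    (hV : Vᴴ * V = 1)
    (μ : Matrix (Fin dM) (Fin dM) ℂ)
    (hμ : μ.PosSemidef) (hμtr : μ.trace = 1) :
    ∃ s : Fin dM → Fin dM → Matrix (Fin dB) (Fin dA) ℂ,
      (∀ (ρ : Matrix (Fin dA) (Fin dA) ℂ) (b : Matrix (Fin dB) (Fin dB) ℂ),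
        ((μ ⊗ₖ ρ) * (Vᴴ * ((b ⊗ₖ (1 : Matrix (Fin dM) (Fin dM) ℂ)) * V))).trace
          = ∑ α : Fin dM, ∑ β : Fin dM,
              (ρ * ((s α β)ᴴ * (b * s α β))).trace) ∧
      ∃ φ : Fin (dA / 2 ^ dM ^ 4) → EuclideanSpace ℂ (Fin dA),
        Orthonormal ℂ φ ∧
          ∃ ω : (Fin dM × Fin dM) → (Fin dM × Fin dM) → ℂ,
            ∀ (α β α' β' : Fin dM) (γ δ : Fin (dA / 2 ^ dM ^ 4)),
              ⟪φ γ, Matrix.toEuclideanLin ((s α β)ᴴ * s α' β') (φ δ)⟫_ℂ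
                = ω (α, β) (α', β') * (if γ = δ then 1 else 0) := by
  classical
  have hH : μ.IsHermitian := hμ.1
  have hlam : ∀ β, 0 ≤ hH.eigenvalues β := fun β => hμ.eigenvalues_nonneg β
  have hdecomp : ∀ m m', μ m m' = ∑ β, (hH.eigenvalues β : ℂ) *
      (hH.eigenvectorBasis β m * star (hH.eigenvectorBasis β m')) := by
    intro m m'
    nth_rewrite 1 [hH.spectral_theorem]
    simp [Matrix.mul_apply, Matrix.diagonal_apply, hH.eigenvectorUnitary_apply, Finset.sum_mul]
    refine Finset.sum_congr rfl fun β _ => ?_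
    ring_nf
  refine ⟨fun α β => fun bb a => (Real.sqrt (hH.eigenvalues β) : ℂ) *
      ∑ m, V (bb, α) (m, a) * hH.eigenvectorBasis β m, ?_, ?_⟩
  · intro ρ b
    exact kraus_trace_identity dA dB dM V hH.eigenvalues (fun β => hH.eigenvectorBasis β) μ
      hdecomp hlam _ (fun α β bb a => rfl) ρ b
  · exact code_exists dA dB dM _
end
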